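/- For an even positive integer m, the abelian group with generators a and b and relations m·a = 0 and m·b = -(m choose 2)·a (where (m choose 2) = m(m-1)/2) is isomorphic to ℤ/(2m) ⊕ ℤ/(m/2), with generators b and a + 2b respectively. -/
import Mathlib


/-- The subgroup of relations: for generators `a = (1,0)` and `b = (0,1)` of `ℤ × ℤ`,
the relations `m·a = 0` and `m·b = -(m choose 2)·a` correspond to the subgroup
generated by `(m, 0)` and `((m choose 2), m)`, where `(m choose 2) = m(m-1)/2`. -/
def lambdaWeightTwoRelations (m : ℕ) : AddSubgroup (ℤ × ℤ) :=
  AddSubgroup.closure {((m : ℤ), 0), (((m * (m - 1) / 2 : ℕ) : ℤ), (m : ℤ))}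

set_option maxHeartbeats 800000 in
/-- For an even positive integer `m`, the abelian group with generators `a`, `b` and
relations `m·a = 0`, `m·b = -(m choose 2)·a` (this is `T^λ_{ℤ,2}(ℤ/m)`) is isomorphic
to `ℤ/(2m) ⊕ ℤ/(m/2)`, with generators `b` and `a + 2b` respectively. -/
theorem lambdaWeightTwo_of_even (m : ℕ) (hm : 0 < m) (heven : Even m) :
    ∃ e : (ℤ × ℤ) ⧸ lambdaWeightTwoRelations m ≃+ ZMod (2 * m) × ZMod (m / 2),
      e (QuotientAddGroup.mk ((0, 1) : ℤ × ℤ)) = ((1 : ZMod (2 * m)), (0 : ZMod (m / 2))) ∧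
      e (QuotientAddGroup.mk ((1, 2) : ℤ × ℤ)) = ((0 : ZMod (2 * m)), (1 : ZMod (m / 2))) := by
  obtain ⟨k, hk⟩ := heven
  have hm2 : m = 2 * k := by omega
  have hk0 : 0 < k := by omega
  have hdiv : m / 2 = k := by omega
  haveI : NeZero (2 * m) := ⟨by omega⟩
  haveI : NeZero (m / 2) := ⟨by omega⟩
  have hC : ((m * (m - 1) / 2 : ℕ) : ℤ) = k * (2 * k - 1) := by
    have h1 : m * (m - 1) = 2 * (k * (m - 1)) := by rw [hm2]; ring
    have hm1 : ((m - 1 : ℕ) : ℤ) = 2 * k - 1 := by omega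
    rw [h1, Nat.mul_div_cancel_left _ (by norm_num : 0 < 2), Nat.cast_mul, hm1]
  set φ : (ℤ × ℤ) →+ ZMod (2 * m) × ZMod (m / 2) :=
    AddMonoidHom.mk' (fun p => (((p.2 - 2 * p.1 : ℤ) : ZMod (2 * m)), ((p.1 : ℤ) : ZMod (m / 2))))
      (by intro p q; ext <;> simp [Prod.fst_add, Prod.snd_add] <;> push_cast <;> ring) with hφ
  have hker : lambdaWeightTwoRelations m = φ.ker := by
    apply le_antisymm
    · rw [lambdaWeightTwoRelations, AddSubgroup.closure_le]
      rintro p (rfl | rfl) <;>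
        simp only [SetLike.mem_coe, AddMonoidHom.mem_ker, hφ, AddMonoidHom.mk'_apply,
          Prod.ext_iff, Prod.fst_zero, Prod.snd_zero]
      · constructor
        · rw [ZMod.intCast_zmod_eq_zero_iff_dvd]
          exact ⟨-1, by push_cast; ring⟩
        · rw [ZMod.intCast_zmod_eq_zero_iff_dvd, hdiv]
          exact ⟨2, by push_cast [hm2]; ring⟩
      · constructor
        · rw [ZMod.intCast_zmod_eq_zero_iff_dvd, hC]
          exact ⟨1 - k, by push_cast [hm2]; ring⟩
        · rw [ZMod.intCast_zmod_eq_zero_iff_dvd, hC, hdiv]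
          exact ⟨2 * k - 1, rfl⟩
    · rintro ⟨x, y⟩ hp
      simp only [AddMonoidHom.mem_ker, hφ, AddMonoidHom.mk'_apply, Prod.ext_iff,
        Prod.fst_zero, Prod.snd_zero] at hp
      obtain ⟨h1, h2⟩ := hp
      rw [ZMod.intCast_zmod_eq_zero_iff_dvd] at h1 h2
      obtain ⟨t, ht⟩ := h1
      obtain ⟨s, hs⟩ := h2
      rw [hdiv] at hs
      push_cast at ht
      have hmem1 : ((m : ℤ), (0:ℤ)) ∈ lambdaWeightTwoRelations m :=
        AddSubgroup.subset_closure (by simp)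
      have hmem2 : (((m * (m - 1) / 2 : ℕ) : ℤ), (m : ℤ)) ∈ lambdaWeightTwoRelations m :=
        AddSubgroup.subset_closure (by simp)
      have key : ((x, y) : ℤ × ℤ) =
          (-((k - 1) * s + (2 * k - 1) * t)) • ((m : ℤ), (0:ℤ)) +
          (s + 2 * t) • (((m * (m - 1) / 2 : ℕ) : ℤ), (m : ℤ)) := by
        rw [hC]
        have hxy : y = 2 * x + 2 * m * t := by linarith
        ext
        · simp only [Prod.fst_add, Prod.smul_fst, smul_eq_mul]
          push_cast [hm2]
          push_cast [hm2] at hxy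
          linear_combination hs
        · simp only [Prod.snd_add, Prod.smul_snd, smul_eq_mul]
          push_cast [hm2]
          push_cast [hm2] at hxy
          linear_combination hxy + 2 * hs
      rw [key]
      exact add_mem (zsmul_mem hmem1 _) (zsmul_mem hmem2 _)
  have hsurj : Function.Surjective φ := by
    rintro ⟨u, v⟩
    refine ⟨((v.val : ℤ), ((u.val : ℤ) + 2 * (v.val : ℤ))), ?_⟩
    simp only [hφ, AddMonoidHom.mk'_apply, Prod.mk.injEq]
    constructor
    · push_cast
      ring_nf
      exact ZMod.natCast_rightInverse u
    · push_cast
      exact ZMod.natCast_rightInverse v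
  have hmk : ∀ p : ℤ × ℤ,
      ((QuotientAddGroup.quotientAddEquivOfEq hker).trans
        (QuotientAddGroup.quotientKerEquivOfSurjective φ hsurj)) (QuotientAddGroup.mk p)
      = φ p := fun p => rfl
  refine ⟨(QuotientAddGroup.quotientAddEquivOfEq hker).trans
    (QuotientAddGroup.quotientKerEquivOfSurjective φ hsurj), ?_, ?_⟩
  · rw [hmk]
    simp only [hφ, AddMonoidHom.mk'_apply]
    norm_num
  · rw [hmk]
    simp only [hφ, AddMonoidHom.mk'_apply]
    norm_num
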